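/- Let α > 0, m > 0, and let β₁, β₂ : ℝ → ℝ be continuous functions such that there is a constant c > 0 with c ≤ β₁(t) ≤ β₂(t) for all t ≥ 0, and such that β₁ is nonincreasing on [0,∞). Let (S₁, I₁, R₁) and (S₂, I₂, R₂) be solutions of the SIR system with transmission rates β₁ and β₂ respectively, with identical initial conditions S₁(0) = S₂(0) = S₀ > 0, I₁(0) = I₂(0) = I₀ > 0, R₁(0) = R₂(0) = R₀ ≥ 0 with S₀ + I₀ + R₀ = m. If S₁(t) → s₁ and S₂(t) → s₂ as t → ∞, then s₁ ≥ s₂. -/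

import Mathlib

open intervalIntegral Set

lemma hasDerivAt_int (g : ℝ → ℝ) (hg : Continuous g) (t : ℝ) :
    HasDerivAt (fun x => ∫ v in (0:ℝ)..x, g v) (g t) t :=
  intervalIntegral.integral_hasDerivAt_right (hg.intervalIntegrable 0 t)
    (hg.stronglyMeasurable.stronglyMeasurableAtFilter) hg.continuousAt

lemma zero_of_deriv (F : ℝ → ℝ) (hFc : Continuous F)
    (hF : ∀ x, 0 ≤ x → HasDerivAt F 0 x) (hF0 : F 0 = 0) :
    ∀ t, 0 ≤ t → F t = 0 := by
  intro t ht
  have := constant_of_has_deriv_right_zero (f := F) (a := 0) (b := t)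
    (hFc.continuousOn) (fun x hx => (hF x hx.1).hasDerivWithinAt) t (by simp [ht])
  simpa [hF0] using this

lemma pos_of_deriv_eq (f g : ℝ → ℝ) (hf : Differentiable ℝ f) (hg : Continuous g)
    (hfg : ∀ t, 0 ≤ t → deriv f t = g t * f t) (h0 : 0 < f 0) :
    ∀ t, 0 ≤ t → 0 < f t := by
  intro t ht
  set G : ℝ → ℝ := fun x => ∫ v in (0:ℝ)..x, g v with hG
  have hGd : ∀ x, HasDerivAt G (g x) x := hasDerivAt_int g hg
  have hGdiff : Differentiable ℝ G := fun x => (hGd x).differentiableAt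
  have hFd : ∀ x, 0 ≤ x → HasDerivAt (fun y => f y * Real.exp (-G y)) 0 x := by
    intro x hx
    have h1 : HasDerivAt f (g x * f x) x := by
      have := (hf x).hasDerivAt
      rwa [hfg x hx] at this
    have h2 : HasDerivAt (fun y => Real.exp (-G y)) (Real.exp (-G x) * (-g x)) x :=
      ((hGd x).neg).exp
    have := h1.mul h2
    refine this.congr_deriv ?_
    ring
  have hF0 : f t * Real.exp (-G t) = f 0 * Real.exp (-G 0) := by
    have := zero_of_deriv (fun x => f x * Real.exp (-G x) - f 0 * Real.exp (-G 0))
      (by have := hf.continuous; have := hGdiff.continuous; fun_prop) (fun x hx => (hFd x hx).sub_const _) (by ring) t ht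
    exact sub_eq_zero.mp (by simpa using this)
  have hpos : 0 < f 0 * Real.exp (-G 0) := by positivity
  rw [← hF0] at hpos
  nlinarith [Real.exp_pos (-G t)]


/-- An SIR model with total population `m`, recovery rate `α`, and transmission
rate `β : ℝ → ℝ` consists of differentiable functions `S, I, R : ℝ → ℝ`
satisfying, for all `t ≥ 0`:
`I'(t) = β(t)·S(t)·I(t)/m − α·I(t)`, `S'(t) = −β(t)·S(t)·I(t)/m`, `R'(t) = α·I(t)`. -/
def IsSIR (α m : ℝ) (β S I R : ℝ → ℝ) : Prop :=
  Differentiable ℝ S ∧ Differentiable ℝ I ∧ Differentiable ℝ R ∧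
  ∀ t : ℝ, 0 ≤ t →
    deriv I t = β t * S t * I t / m - α * I t ∧
    deriv S t = -(β t * S t * I t / m) ∧
    deriv R t = α * I t

lemma knum (a b k B pv : ℝ) (hk0 : k ≤ 0) (hkB : -B ≤ k) (hpv : pv = max (b - a) 0) :
    (a - b) * k ≤ B * pv := by
  rcases le_total b a with h | h
  · have hz : pv = 0 := by rw [hpv]; exact max_eq_right (by linarith)
    rw [hz, mul_zero]
    exact mul_nonpos_of_nonneg_of_nonpos (by linarith) hk0
  · have hz : pv = b - a := by rw [hpv]; exact max_eq_left (by linarith)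
    rw [hz]
    nlinarith

lemma pbound (x y L mm BQ : ℝ)
    (h1 : y * (-L + 1) ≤ x) (h2 : L * mm ≤ BQ) (h3 : 0 ≤ L * (mm - y)) :
    y - x ≤ BQ := by nlinarith

set_option maxHeartbeats 2000000 in
theorem stmt_0 (α m c : ℝ) (hα : 0 < α) (hm : 0 < m) (hc : 0 < c)
    (β₁ β₂ : ℝ → ℝ) (hβ₁c : Continuous β₁) (hβ₂c : Continuous β₂)
    (hlb : ∀ t : ℝ, 0 ≤ t → c ≤ β₁ t)
    (hle : ∀ t : ℝ, 0 ≤ t → β₁ t ≤ β₂ t)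
    (hmono : AntitoneOn β₁ (Set.Ici (0 : ℝ)))
    (S₁ I₁ R₁ S₂ I₂ R₂ : ℝ → ℝ)
    (h₁ : IsSIR α m β₁ S₁ I₁ R₁) (h₂ : IsSIR α m β₂ S₂ I₂ R₂)
    (S₀ I₀ R₀ : ℝ) (hS₀ : 0 < S₀) (hI₀ : 0 < I₀) (hR₀ : 0 ≤ R₀)
    (hsum : S₀ + I₀ + R₀ = m)
    (hS₁0 : S₁ 0 = S₀) (hS₂0 : S₂ 0 = S₀)
    (hI₁0 : I₁ 0 = I₀) (hI₂0 : I₂ 0 = I₀)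
    (hR₁0 : R₁ 0 = R₀) (hR₂0 : R₂ 0 = R₀)
    (s₁ s₂ : ℝ)
    (hlim₁ : Filter.Tendsto S₁ Filter.atTop (nhds s₁))
    (hlim₂ : Filter.Tendsto S₂ Filter.atTop (nhds s₂)) :
    s₂ ≤ s₁ := by
  obtain ⟨hS₁d, hI₁d, hR₁d, heq₁⟩ := h₁
  obtain ⟨hS₂d, hI₂d, hR₂d, heq₂⟩ := h₂
  have cS₁ := hS₁d.continuous
  have cS₂ := hS₂d.continuous
  have cI₁ := hI₁d.continuous
  have cI₂ := hI₂d.continuous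
  have cR₁ := hR₁d.continuous
  have cR₂ := hR₂d.continuous
  -- positivity of I and S
  have I₁pos : ∀ t, 0 ≤ t → 0 < I₁ t := by
    apply pos_of_deriv_eq I₁ (fun t => β₁ t * S₁ t / m - α) hI₁d (by fun_prop)
      (fun t ht => by rw [(heq₁ t ht).1]; ring)
    rw [hI₁0]; exact hI₀
  have I₂pos : ∀ t, 0 ≤ t → 0 < I₂ t := by
    apply pos_of_deriv_eq I₂ (fun t => β₂ t * S₂ t / m - α) hI₂d (by fun_prop)
      (fun t ht => by rw [(heq₂ t ht).1]; ring)
    rw [hI₂0]; exact hI₀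
  have S₁pos : ∀ t, 0 ≤ t → 0 < S₁ t := by
    apply pos_of_deriv_eq S₁ (fun t => -(β₁ t * I₁ t / m)) hS₁d (by fun_prop)
      (fun t ht => by rw [(heq₁ t ht).2.1]; ring)
    rw [hS₁0]; exact hS₀
  have S₂pos : ∀ t, 0 ≤ t → 0 < S₂ t := by
    apply pos_of_deriv_eq S₂ (fun t => -(β₂ t * I₂ t / m)) hS₂d (by fun_prop)
      (fun t ht => by rw [(heq₂ t ht).2.1]; ring)
    rw [hS₂0]; exact hS₀
  -- conservation
  have sum₁ : ∀ t, 0 ≤ t → S₁ t + I₁ t + R₁ t = m := by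
    intro t ht
    have := zero_of_deriv (fun x => S₁ x + I₁ x + R₁ x - m) (by fun_prop)
      (fun x hx => by
        have hd : HasDerivAt (fun y => S₁ y + I₁ y + R₁ y - m)
            (deriv S₁ x + deriv I₁ x + deriv R₁ x) x :=
          ((((hS₁d x).hasDerivAt.add (hI₁d x).hasDerivAt)).add (hR₁d x).hasDerivAt).sub_const m
        have hz : deriv S₁ x + deriv I₁ x + deriv R₁ x = 0 := by
          obtain ⟨e1, e2, e3⟩ := heq₁ x hx
          rw [e1, e2, e3]; ring
        rwa [hz] at hd)
      (by show S₁ 0 + I₁ 0 + R₁ 0 - m = 0; rw [hS₁0, hI₁0, hR₁0]; linarith) t ht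
    linarith
  have sum₂ : ∀ t, 0 ≤ t → S₂ t + I₂ t + R₂ t = m := by
    intro t ht
    have := zero_of_deriv (fun x => S₂ x + I₂ x + R₂ x - m) (by fun_prop)
      (fun x hx => by
        have hd : HasDerivAt (fun y => S₂ y + I₂ y + R₂ y - m)
            (deriv S₂ x + deriv I₂ x + deriv R₂ x) x :=
          ((((hS₂d x).hasDerivAt.add (hI₂d x).hasDerivAt)).add (hR₂d x).hasDerivAt).sub_const m
        have hz : deriv S₂ x + deriv I₂ x + deriv R₂ x = 0 := by
          obtain ⟨e1, e2, e3⟩ := heq₂ x hx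
          rw [e1, e2, e3]; ring
        rwa [hz] at hd)
      (by show S₂ 0 + I₂ 0 + R₂ 0 - m = 0; rw [hS₂0, hI₂0, hR₂0]; linarith) t ht
    linarith
  -- R₂ is nondecreasing, hence `S₂ ≤ m`
  have R₂mono : ∀ t, 0 ≤ t → R₀ ≤ R₂ t := by
    intro t ht
    have hmon : MonotoneOn R₂ (Set.Ici (0:ℝ)) := by
      apply monotoneOn_of_deriv_nonneg (convex_Ici 0) cR₂.continuousOn
        (hR₂d.differentiableOn)
      intro x hx
      rw [interior_Ici] at hx
      rw [(heq₂ x (le_of_lt hx)).2.2]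
      have := I₂pos x (le_of_lt hx)
      positivity
    have := hmon (self_mem_Ici) (mem_Ici.mpr ht) ht
    rwa [hR₂0] at this
  have S₂lem : ∀ t, 0 ≤ t → S₂ t ≤ m := by
    intro t ht
    have := sum₂ t ht
    have := I₂pos t ht
    have := R₂mono t ht
    linarith
  -- auxiliary functions
  set p : ℝ → ℝ := fun v => max (S₂ v - S₁ v) 0 with hp_def
  have hp_cont : Continuous p := (cS₂.sub cS₁).max continuous_const
  have hp_nonneg : ∀ v, 0 ≤ p v := fun v => le_max_right _ _
  set Q : ℝ → ℝ := fun x => ∫ v in (0:ℝ)..x, p v with hQ_def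
  have hQd : ∀ x, HasDerivAt Q (p x) x := by rw [hQ_def]; exact hasDerivAt_int p hp_cont
  have hQc : Continuous Q :=
    Differentiable.continuous (fun x => (hQd x).differentiableAt)
  have hQ0 : Q 0 = 0 := by simp only [hQ_def]; exact intervalIntegral.integral_same
  have hQnonneg : ∀ t, 0 ≤ t → 0 ≤ Q t := by
    intro t ht
    simp only [hQ_def]
    exact intervalIntegral.integral_nonneg ht (fun v _ => hp_nonneg v)
  set f : ℝ → ℝ := fun v => Real.exp (α * v) * (S₁ v - S₂ v) with hf_def
  have hf_cont : Continuous f := by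
    apply Continuous.mul (by fun_prop) (cS₁.sub cS₂)
  set u : ℝ → ℝ := fun x => ∫ v in (0:ℝ)..x, f v with hu_def
  have hud : ∀ x, HasDerivAt u (f x) x := by rw [hu_def]; exact hasDerivAt_int f hf_cont
  have huc : Continuous u :=
    Differentiable.continuous (fun x => (hud x).differentiableAt)
  have hu0 : u 0 = 0 := by simp only [hu_def]; exact intervalIntegral.integral_same
  set W : ℝ → ℝ := fun x => ∫ v in (0:ℝ)..x, β₁ v * Real.exp (-(α * v)) with hW_def
  have hWi_cont : Continuous (fun v => β₁ v * Real.exp (-(α * v))) := by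
    apply Continuous.mul hβ₁c (by fun_prop)
  have hWd : ∀ x, HasDerivAt W (β₁ x * Real.exp (-(α * x))) x := by
    rw [hW_def]; exact hasDerivAt_int _ hWi_cont
  have hWc : Continuous W :=
    Differentiable.continuous (fun x => (hWd x).differentiableAt)
  clear_value p Q f u W
  -- K1: variation of constants formula for R₂ - R₁
  have K1 : ∀ v, 0 ≤ v → R₂ v - R₁ v = α * Real.exp (-(α * v)) * u v := by
    intro v hv
    have key := zero_of_deriv (fun y => Real.exp (α * y) * (R₂ y - R₁ y) - α * u y)
      (by apply Continuous.sub (Continuous.mul (by fun_prop) (cR₂.sub cR₁)) (continuous_const.mul huc))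
      (fun x hx => by
        have hh : HasDerivAt (fun y => R₂ y - R₁ y) (α * I₂ x - α * I₁ x) x := by
          have := HasDerivAt.sub (hR₂d x).hasDerivAt (hR₁d x).hasDerivAt
          rwa [(heq₂ x hx).2.2, (heq₁ x hx).2.2] at this
        have hexp : HasDerivAt (fun y => Real.exp (α * y)) (Real.exp (α * x) * α) x := by
          simpa using ((hasDerivAt_id x).const_mul α).exp
        have hcomb := (hexp.mul hh).sub ((hud x).const_mul α)
        refine hcomb.congr_deriv ?_
        have hI2 : I₂ x = m - S₂ x - R₂ x := by linarith [sum₂ x hx]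
        have hI1 : I₁ x = m - S₁ x - R₁ x := by linarith [sum₁ x hx]
        rw [hI2, hI1, hf_def]
        ring)
      (by
        show Real.exp (α * 0) * (R₂ 0 - R₁ 0) - α * u 0 = 0
        rw [hR₂0, hR₁0, hu0]; ring) v hv
    have key' : Real.exp (α * v) * (R₂ v - R₁ v) - α * u v = 0 := key
    have hexpne : Real.exp (α * v) ≠ 0 := Real.exp_ne_zero _
    rw [Real.exp_neg]
    field_simp
    linarith [key']
  -- the key integral estimate
  have hg1c : Continuous (fun v => β₁ v * Real.exp (-(α * v)) * u v) := hWi_cont.mul huc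
  have hg3c : Continuous (fun v => f v * W v) := hf_cont.mul hWc
  have key : ∀ t, 0 ≤ t → Real.log (S₂ t) - Real.log (S₁ t) ≤ β₁ 0 / m * Q t := by
    intro t ht
    -- Fubini-type swap, proved by differentiation
    have hswap0 := zero_of_deriv
      (fun x => (∫ v in (0:ℝ)..x, β₁ v * Real.exp (-(α * v)) * u v)
        - W x * u x + ∫ v in (0:ℝ)..x, f v * W v)
      (by
        refine Continuous.add (Continuous.sub ?_ (hWc.mul huc)) ?_
        · exact Differentiable.continuous (fun x => (hasDerivAt_int _ hg1c x).differentiableAt)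
        · exact Differentiable.continuous (fun x => (hasDerivAt_int _ hg3c x).differentiableAt))
      (fun x _ => by
        have hcomb := ((hasDerivAt_int _ hg1c x).sub ((hWd x).mul (hud x))).add
          (hasDerivAt_int _ hg3c x)
        refine hcomb.congr_deriv ?_
        ring)
      (by
        show (∫ v in (0:ℝ)..(0:ℝ), β₁ v * Real.exp (-(α * v)) * u v)
          - W 0 * u 0 + (∫ v in (0:ℝ)..(0:ℝ), f v * W v) = 0
        rw [intervalIntegral.integral_same, intervalIntegral.integral_same, hu0]; ring) t ht
    have hswap : (∫ v in (0:ℝ)..t, β₁ v * Real.exp (-(α * v)) * u v)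
        = ∫ v in (0:ℝ)..t, f v * (W t - W v) := by
      have h1 : (∫ v in (0:ℝ)..t, f v * (W t - W v))
          = (∫ v in (0:ℝ)..t, f v) * W t - ∫ v in (0:ℝ)..t, f v * W v := by
        calc (∫ v in (0:ℝ)..t, f v * (W t - W v))
            = ∫ v in (0:ℝ)..t, (f v * W t - f v * W v) := by
              apply intervalIntegral.integral_congr
              intro v _; ring
          _ = (∫ v in (0:ℝ)..t, f v * W t) - ∫ v in (0:ℝ)..t, f v * W v :=
              intervalIntegral.integral_sub
                ((hf_cont.mul continuous_const).intervalIntegrable 0 t)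
                (hg3c.intervalIntegrable 0 t)
          _ = (∫ v in (0:ℝ)..t, f v) * W t - ∫ v in (0:ℝ)..t, f v * W v := by
              rw [intervalIntegral.integral_mul_const]
      have h2 : (∫ v in (0:ℝ)..t, f v) = u t := by simp only [hu_def]
      have h0 : (∫ v in (0:ℝ)..t, β₁ v * Real.exp (-(α * v)) * u v)
          - W t * u t + (∫ v in (0:ℝ)..t, f v * W v) = 0 := hswap0
      rw [h1, h2]
      linarith [h0]
    -- fundamental theorem of calculus for log S₂ - log S₁
    have Lint : Real.log (S₂ t) - Real.log (S₁ t)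
        = ∫ v in (0:ℝ)..t, (β₁ v * I₁ v - β₂ v * I₂ v) / m := by
      have hFTC := intervalIntegral.integral_eq_sub_of_hasDerivAt
        (f := fun y => Real.log (S₂ y) - Real.log (S₁ y))
        (f' := fun v => (β₁ v * I₁ v - β₂ v * I₂ v) / m)
        (fun x hx => by
          rw [Set.uIcc_of_le ht] at hx
          have hx0 : 0 ≤ x := hx.1
          have hS2 : HasDerivAt (fun y => Real.log (S₂ y)) (deriv S₂ x / S₂ x) x :=
            HasDerivAt.log (hS₂d x).hasDerivAt (ne_of_gt (S₂pos x hx0))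
          have hS1 : HasDerivAt (fun y => Real.log (S₁ y)) (deriv S₁ x / S₁ x) x :=
            HasDerivAt.log (hS₁d x).hasDerivAt (ne_of_gt (S₁pos x hx0))
          have hcomb := hS2.sub hS1
          refine hcomb.congr_deriv ?_
          rw [(heq₂ x hx0).2.1, (heq₁ x hx0).2.1]
          have h2 := ne_of_gt (S₂pos x hx0)
          have h1 := ne_of_gt (S₁pos x hx0)
          field_simp
          ring)
        (Continuous.intervalIntegrable
          (((hβ₁c.mul cI₁).sub (hβ₂c.mul cI₂)).div_const m) 0 t)
      rw [hFTC]
      show _ = (Real.log (S₂ t) - Real.log (S₁ t)) - (Real.log (S₂ 0) - Real.log (S₁ 0))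
      rw [hS₂0, hS₁0]; ring
    -- bounds for the kernel k v = α e^{αv}(W t - W v) - β₁ v on [0,t]
    have hWsub : ∀ v : ℝ, W t - W v = ∫ x in v..t, β₁ x * Real.exp (-(α * x)) := by
      intro v
      have h := intervalIntegral.integral_add_adjacent_intervals (μ := MeasureTheory.volume)
        (hWi_cont.intervalIntegrable 0 v) (hWi_cont.intervalIntegrable v t)
      simp only [hW_def]
      linarith [h]
    have hexpint : ∀ v : ℝ, α * ∫ x in v..t, Real.exp (-(α * x))
        = Real.exp (-(α * v)) - Real.exp (-(α * t)) := by
      intro v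
      have hFTC := intervalIntegral.integral_eq_sub_of_hasDerivAt
        (f := fun y => -(Real.exp (-(α * y)) / α))
        (f' := fun x => Real.exp (-(α * x)))
        (fun x _ => by
          have hd1 : HasDerivAt (fun y => Real.exp (-(α * y))) (Real.exp (-(α * x)) * (-α)) x := by
            simpa using (((hasDerivAt_id x).const_mul α).neg).exp
          have hd2 := (hd1.div_const α).neg
          refine hd2.congr_deriv ?_
          field_simp)
        (Continuous.intervalIntegrable (by fun_prop) v t)
      rw [hFTC]
      field_simp
      ring
    have kbound : ∀ v ∈ Set.Icc (0:ℝ) t,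
        α * Real.exp (α * v) * (W t - W v) - β₁ v ≤ 0 ∧
        -β₁ 0 ≤ α * Real.exp (α * v) * (W t - W v) - β₁ v := by
      intro v hv
      have hβv0 : 0 ≤ β₁ v := le_trans hc.le (hlb v hv.1)
      have hint_le : (∫ x in v..t, β₁ x * Real.exp (-(α * x)))
          ≤ β₁ v * ∫ x in v..t, Real.exp (-(α * x)) := by
        rw [← intervalIntegral.integral_const_mul]
        apply intervalIntegral.integral_mono_on hv.2
          (hWi_cont.intervalIntegrable v t)
          ((continuous_const.mul (by fun_prop : Continuous fun x : ℝ => Real.exp (-(α * x)))).intervalIntegrable v t)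
        intro x hx
        have hmx : β₁ x ≤ β₁ v :=
          hmono (Set.mem_Ici.mpr hv.1) (Set.mem_Ici.mpr (le_trans hv.1 hx.1)) hx.1
        exact mul_le_mul_of_nonneg_right hmx (Real.exp_nonneg _)
      have hint_nonneg : 0 ≤ ∫ x in v..t, β₁ x * Real.exp (-(α * x)) :=
        intervalIntegral.integral_nonneg hv.2 (fun x hx =>
          mul_nonneg (le_trans hc.le (hlb x (le_trans hv.1 hx.1))) (Real.exp_nonneg _))
      have e1 : Real.exp (α * v) * Real.exp (-(α * v)) = 1 := by
        rw [← Real.exp_add]; ring_nf; exact Real.exp_zero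
      constructor
      · rw [hWsub v]
        have h4 := mul_le_mul_of_nonneg_left hint_le (Real.exp_nonneg (α * v))
        have h4' := mul_le_mul_of_nonneg_left h4 hα.le
        have h6 : Real.exp (α * v) * β₁ v * (α * ∫ x in v..t, Real.exp (-(α * x)))
            = Real.exp (α * v) * β₁ v * (Real.exp (-(α * v)) - Real.exp (-(α * t))) := by
          rw [hexpint v]
        have h7 : β₁ v * (Real.exp (α * v) * Real.exp (-(α * v))) = β₁ v := by
          rw [e1]; ring
        have h8 : 0 ≤ β₁ v * (Real.exp (α * v) * Real.exp (-(α * t))) :=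
          mul_nonneg hβv0 (mul_nonneg (Real.exp_nonneg _) (Real.exp_nonneg _))
        nlinarith [h4', h6, h7, h8]
      · rw [hWsub v]
        have hpos : 0 ≤ α * Real.exp (α * v) * (∫ x in v..t, β₁ x * Real.exp (-(α * x))) :=
          mul_nonneg (by positivity) hint_nonneg
        have hβ0 : β₁ v ≤ β₁ 0 := hmono Set.self_mem_Ici (Set.mem_Ici.mpr hv.1) hv.1
        linarith
    -- step 1 : log difference bounded by kernel integral
    have step1 : Real.log (S₂ t) - Real.log (S₁ t)
        ≤ ∫ v in (0:ℝ)..t, (S₁ v - S₂ v) * (α * Real.exp (α * v) * (W t - W v) - β₁ v) / m := by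
      rw [Lint]
      have int1 : IntervalIntegrable (fun v => (β₁ v * I₁ v - β₂ v * I₂ v) / m)
          MeasureTheory.volume 0 t :=
        Continuous.intervalIntegrable (((hβ₁c.mul cI₁).sub (hβ₂c.mul cI₂)).div_const m) 0 t
      have cmid : Continuous (fun v => (β₁ v * (S₂ v - S₁ v)
          + β₁ v * (α * Real.exp (-(α * v)) * u v)) / m) := by
        apply Continuous.div_const
        exact Continuous.add (hβ₁c.mul (cS₂.sub cS₁))
          (hβ₁c.mul (Continuous.mul (by fun_prop) huc))
      have hmid : (∫ v in (0:ℝ)..t, (β₁ v * I₁ v - β₂ v * I₂ v) / m)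
          ≤ ∫ v in (0:ℝ)..t, (β₁ v * (S₂ v - S₁ v)
              + β₁ v * (α * Real.exp (-(α * v)) * u v)) / m := by
        apply intervalIntegral.integral_mono_on ht int1 (cmid.intervalIntegrable 0 t)
        intro v hv
        rw [← K1 v hv.1]
        apply (div_le_div_iff_of_pos_right hm).mpr
        have hβ := hle v hv.1
        have hI2p := I₂pos v hv.1
        have hI1e : I₁ v = m - S₁ v - R₁ v := by linarith [sum₁ v hv.1]
        have hI2e : I₂ v = m - S₂ v - R₂ v := by linarith [sum₂ v hv.1]
        have hq : β₁ v * (I₁ v - I₂ v) = β₁ v * ((S₂ v - S₁ v) + (R₂ v - R₁ v)) := by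
          rw [hI1e, hI2e]; ring
        nlinarith [mul_le_mul_of_nonneg_right hβ hI2p.le, hq]
      have hsplit : (∫ v in (0:ℝ)..t, (β₁ v * (S₂ v - S₁ v)
              + β₁ v * (α * Real.exp (-(α * v)) * u v)) / m)
          = ∫ v in (0:ℝ)..t, (S₁ v - S₂ v) * (α * Real.exp (α * v) * (W t - W v) - β₁ v) / m := by
        have c1 : Continuous (fun v => β₁ v * (S₂ v - S₁ v) / m) :=
          ((hβ₁c.mul (cS₂.sub cS₁)).div_const m)
        have e1 : (∫ v in (0:ℝ)..t, (β₁ v * (S₂ v - S₁ v)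
                + β₁ v * (α * Real.exp (-(α * v)) * u v)) / m)
            = (∫ v in (0:ℝ)..t, β₁ v * (S₂ v - S₁ v) / m)
              + (α / m) * ∫ v in (0:ℝ)..t, β₁ v * Real.exp (-(α * v)) * u v := by
          rw [← intervalIntegral.integral_const_mul]
          rw [← intervalIntegral.integral_add (c1.intervalIntegrable 0 t)
            (g := fun v => α / m * (β₁ v * Real.exp (-(α * v)) * u v)) ((continuous_const.mul hg1c).intervalIntegrable 0 t)]
          apply intervalIntegral.integral_congr
          intro v _; ring
        have e2 : (∫ v in (0:ℝ)..t, β₁ v * (S₂ v - S₁ v) / m)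
              + (α / m) * (∫ v in (0:ℝ)..t, f v * (W t - W v))
            = ∫ v in (0:ℝ)..t, (S₁ v - S₂ v) * (α * Real.exp (α * v) * (W t - W v) - β₁ v) / m := by
          rw [← intervalIntegral.integral_const_mul]
          rw [← intervalIntegral.integral_add (c1.intervalIntegrable 0 t)
            (g := fun v => α / m * (f v * (W t - W v))) ((continuous_const.mul (hf_cont.mul (continuous_const.sub hWc))).intervalIntegrable 0 t)]
          apply intervalIntegral.integral_congr
          intro v _
          simp only [hf_def]
          ring
        rw [e1, hswap, e2]
      rw [← hsplit]
      exact hmid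
    -- step 2 : kernel integral bounded by β₁ 0 / m * Q t
    have step2 : (∫ v in (0:ℝ)..t, (S₁ v - S₂ v) * (α * Real.exp (α * v) * (W t - W v) - β₁ v) / m)
        ≤ β₁ 0 / m * Q t := by
      have hQint : (∫ v in (0:ℝ)..t, β₁ 0 / m * p v) = β₁ 0 / m * Q t := by
        simp only [hQ_def]
        exact intervalIntegral.integral_const_mul _ _
      have cL : Continuous (fun v => (S₁ v - S₂ v)
          * (α * Real.exp (α * v) * (W t - W v) - β₁ v) / m) := by
        apply Continuous.div_const
        exact (cS₁.sub cS₂).mul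
          ((((continuous_const.mul (by fun_prop : Continuous fun v : ℝ => Real.exp (α * v)))).mul
            (continuous_const.sub hWc)).sub hβ₁c)
      refine le_trans (intervalIntegral.integral_mono_on ht (cL.intervalIntegrable 0 t)
        ((continuous_const.mul hp_cont).intervalIntegrable 0 t) ?_) (le_of_eq hQint)
      intro v hv
      obtain ⟨hk_le, hk_ge⟩ := kbound v hv
      have hnum : (S₁ v - S₂ v) * (α * Real.exp (α * v) * (W t - W v) - β₁ v) ≤ β₁ 0 * p v :=
        knum _ _ _ _ _ hk_le hk_ge (by simp only [hp_def])
      calc (S₁ v - S₂ v) * (α * Real.exp (α * v) * (W t - W v) - β₁ v) / m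
          ≤ (β₁ 0 * p v) / m := (div_le_div_iff_of_pos_right hm).mpr hnum
        _ = β₁ 0 / m * p v := by ring
    exact le_trans step1 step2
  -- pointwise bound: p t ≤ β₁ 0 * Q t
  have ptQ : ∀ t, 0 ≤ t → p t ≤ β₁ 0 * Q t := by
    intro t ht
    have hβ00 : 0 < β₁ 0 := lt_of_lt_of_le hc (hlb 0 le_rfl)
    rcases le_total (S₂ t) (S₁ t) with hcase | hcase
    · have hp0 : p t = 0 := by simp only [hp_def]; exact max_eq_right (by linarith)
      rw [hp0]
      exact mul_nonneg hβ00.le (hQnonneg t ht)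
    · have hS1p := S₁pos t ht
      have hS2p := S₂pos t ht
      have hL := key t ht
      have hLQ : (Real.log (S₂ t) - Real.log (S₁ t)) * m ≤ β₁ 0 * Q t := by
        have := mul_le_mul_of_nonneg_right hL hm.le
        calc (Real.log (S₂ t) - Real.log (S₁ t)) * m ≤ β₁ 0 / m * Q t * m := this
          _ = β₁ 0 * Q t := by field_simp
      have hexp : Real.exp (Real.log (S₁ t) - Real.log (S₂ t)) = S₁ t / S₂ t := by
        rw [Real.exp_sub, Real.exp_log hS1p, Real.exp_log hS2p]
      have hlog1 := Real.add_one_le_exp (Real.log (S₁ t) - Real.log (S₂ t))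
      rw [hexp] at hlog1
      have hmul := mul_le_mul_of_nonneg_left hlog1 hS2p.le
      rw [mul_div_cancel₀ _ (ne_of_gt hS2p)] at hmul
      have hlogmono : 0 ≤ Real.log (S₂ t) - Real.log (S₁ t) := by
        have := Real.log_le_log hS1p hcase
        linarith
      have hSm := S₂lem t ht
      have hpe : p t = S₂ t - S₁ t := by simp only [hp_def]; exact max_eq_left (by linarith)
      rw [hpe]
      apply pbound (S₁ t) (S₂ t) (Real.log (S₂ t) - Real.log (S₁ t)) m (β₁ 0 * Q t)
      · nlinarith [hmul]
      · exact hLQ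
      · exact mul_nonneg hlogmono (by linarith)
  -- Grönwall: Q ≡ 0 on [0,∞), hence S₂ ≤ S₁ there
  have Qzero : ∀ t, 0 ≤ t → Q t = 0 := by
    intro t ht
    have hEd : ∀ x, HasDerivAt (fun y => Q y * Real.exp (-(β₁ 0 * y)))
        ((p x - β₁ 0 * Q x) * Real.exp (-(β₁ 0 * x))) x := by
      intro x
      have h1 : HasDerivAt (fun y => Real.exp (-(β₁ 0 * y)))
          (Real.exp (-(β₁ 0 * x)) * (-β₁ 0)) x := by
        simpa using (((hasDerivAt_id x).const_mul (β₁ 0)).neg).exp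
      have := (hQd x).mul h1
      refine this.congr_deriv ?_
      ring
    have hanti : AntitoneOn (fun y => Q y * Real.exp (-(β₁ 0 * y))) (Set.Ici (0:ℝ)) := by
      apply antitoneOn_of_deriv_nonpos (convex_Ici 0)
      · exact Continuous.continuousOn (by
          exact hQc.mul (Real.continuous_exp.comp (continuous_const.mul continuous_id).neg))
      · intro x _
        exact ((hEd x).differentiableAt).differentiableWithinAt
      · intro x hx
        rw [interior_Ici] at hx
        rw [(hEd x).deriv]
        have hpq := ptQ x hx.le
        exact mul_nonpos_of_nonpos_of_nonneg (by linarith) (Real.exp_nonneg _)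
    have h0 : Q t * Real.exp (-(β₁ 0 * t)) ≤ Q 0 * Real.exp (-(β₁ 0 * 0)) :=
      hanti Set.self_mem_Ici (Set.mem_Ici.mpr ht) ht
    rw [hQ0] at h0
    have := hQnonneg t ht
    nlinarith [Real.exp_pos (-(β₁ 0 * t))]
  have Sle : ∀ t, 0 ≤ t → S₂ t ≤ S₁ t := by
    intro t ht
    have h1 := ptQ t ht
    rw [Qzero t ht, mul_zero] at h1
    have h2 : S₂ t - S₁ t ≤ p t := by simp only [hp_def]; exact le_max_left _ _
    linarith
  exact le_of_tendsto_of_tendsto hlim₂ hlim₁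
    (Filter.eventually_atTop.mpr ⟨0, fun t ht => Sle t ht⟩)
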